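/- Let (Γ, N) and (Γ', N') be equivalent link-regular numbered graphs, with geodesic automata 𝒟 (transition δ) and 𝒟' (transition δ'), and let Σ and Σ' be powered cliques of (Γ, N) and (Γ', N') respectively with P(Σ) = P(Σ'). Then there exists a bijection Φ : VΓ → VΓ' such that N'(Φ(v)) = N(v) for all v ∈ VΓ, and for every v ∈ VΓ and each sign ε ∈ {+1, −1}: δ(Σ, v^ε) is the reject state of 𝒟 if and only if δ'(Σ', Φ(v)^ε) is the reject state of 𝒟', and when both are powered cliques, P(δ(Σ, v^ε)) = P(δ'(Σ', Φ(v)^ε)). -/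

import Mathlib

variable {V V' : Type*}

/-- The link of a finite set of vertices `σ`: vertices `v ∉ σ` with `σ ∪ {v}` a clique. -/
noncomputable def lk [Fintype V] (G : SimpleGraph V) (σ : Finset V) : Finset V :=
  Set.Finite.toFinset (Set.toFinite {v : V | v ∉ σ ∧ G.IsClique (insert v (σ : Set V))})

/-- `N(U)`: the multiset of vertex numbers of a finite set of vertices. -/
def NM (N : V → ℕ) (U : Finset V) : Multiset ℕ := U.val.map N

/-- Link-regularity of a numbered graph. -/
def LinkRegular [Fintype V] (G : SimpleGraph V) (N : V → ℕ) : Prop :=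
  ∀ σ₁ σ₂ : Finset V, G.IsClique (σ₁ : Set V) → G.IsClique (σ₂ : Set V) →
    NM N σ₁ = NM N σ₂ → NM N (lk G σ₁) = NM N (lk G σ₂)

/-- Equivalence of link-regular numbered graphs. -/
def EquivLinkRegular [Fintype V] [Fintype V'] (G : SimpleGraph V) (N : V → ℕ)
    (G' : SimpleGraph V') (N' : V' → ℕ) : Prop :=
  NM N Finset.univ = NM N' Finset.univ ∧
  ∀ (σ : Finset V) (σ' : Finset V'), G.IsClique (σ : Set V) → G'.IsClique (σ' : Set V') →
    NM N σ = NM N' σ' → NM N (lk G σ) = NM N' (lk G' σ')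

/-- A powered clique of a numbered graph, as a function `V → ℤ`. -/
def IsPoweredClique (G : SimpleGraph V) (N : V → ℕ) (f : V → ℤ) : Prop :=
  G.IsClique {v | f v ≠ 0} ∧
  ∀ v, (N v = 2 → 0 ≤ f v ∧ f v ≤ 1) ∧
       (N v ≠ 2 → -((N v / 2 : ℕ) : ℤ) ≤ f v ∧ f v ≤ ((N v / 2 : ℕ) : ℤ))

/-- The transition function of the geodesic automaton: `none` is the reject state.
The letter `(v, true)` is `v`, and `(v, false)` is `v⁻¹`. -/
def step (G : SimpleGraph V) [DecidableRel G.Adj] [DecidableEq V] (N : V → ℕ)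
    (f : V → ℤ) (l : V × Bool) : Option (V → ℤ) :=
  if l.2 then
    if 0 ≤ f l.1 ∧ f l.1 < ((N l.1 / 2 : ℕ) : ℤ) then
      some fun u => if u = l.1 then f l.1 + 1 else if G.Adj l.1 u then f u else 0
    else none
  else
    if N l.1 ≠ 2 ∧ -((N l.1 / 2 : ℕ) : ℤ) < f l.1 ∧ f l.1 ≤ 0 then
      some fun u => if u = l.1 then f l.1 - 1 else if G.Adj l.1 u then f u else 0
    else none

/-- The power profile of a powered clique. -/
noncomputable def profile [Fintype V] (N : V → ℕ) (f : V → ℤ) : Multiset (ℤ × ℕ) :=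
  (Set.Finite.toFinset (Set.toFinite {v : V | f v ≠ 0})).val.map fun v => (f v, N v)


lemma exists_equiv_of_map_eq {α β γ : Type*} [Fintype α] [Fintype β] [DecidableEq γ]
    (T : α → γ) (T' : β → γ)
    (h : Multiset.map T Finset.univ.val = Multiset.map T' Finset.univ.val) :
    ∃ e : α ≃ β, ∀ a, T' (e a) = T a := by
  have hc : ∀ c, Fintype.card {a // T a = c} = Fintype.card {b // T' b = c} := by
    intro c
    rw [Fintype.card_subtype, Fintype.card_subtype]
    have h2 := congrArg (Multiset.count c) h
    rw [Multiset.count_map, Multiset.count_map] at h2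
    simpa [Finset.card_filter, Finset.card, Finset.filter, eq_comm] using h2
  exact ⟨Equiv.ofFiberEquiv (fun c => Fintype.equivOfCardEq (hc c)),
    fun a => Equiv.ofFiberEquiv_map _ a⟩



def tmap [DecidableEq V] (σ : Finset V) (σ' : Finset V')
    (e : {x // x ∈ σ} ≃ {x // x ∈ σ'}) (τ : Finset V) : Finset V' :=
  (τ.subtype (· ∈ σ)).map (e.toEmbedding.trans (Function.Embedding.subtype _))

lemma mem_tmap [DecidableEq V] {σ : Finset V} {σ' : Finset V'}
    {e : {x // x ∈ σ} ≃ {x // x ∈ σ'}} {τ : Finset V} {y : V'} :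
    y ∈ tmap σ σ' e τ ↔ ∃ x : {x // x ∈ σ}, ↑x ∈ τ ∧ ↑(e x) = y := by
  simp [tmap, Finset.mem_map, Finset.mem_subtype]

lemma tmap_subset [DecidableEq V] {σ : Finset V} {σ' : Finset V'}
    {e : {x // x ∈ σ} ≃ {x // x ∈ σ'}} {τ : Finset V} : tmap σ σ' e τ ⊆ σ' := by
  intro y hy
  obtain ⟨x, _, hx⟩ := mem_tmap.1 hy
  exact hx ▸ (e x).2

lemma tmap_mono [DecidableEq V] {σ : Finset V} {σ' : Finset V'}
    {e : {x // x ∈ σ} ≃ {x // x ∈ σ'}} {τ₁ τ₂ : Finset V} (h : τ₁ ⊆ τ₂) :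
    tmap σ σ' e τ₁ ⊆ tmap σ σ' e τ₂ := by
  intro y hy
  obtain ⟨x, hx1, hx2⟩ := mem_tmap.1 hy
  exact mem_tmap.2 ⟨x, h hx1, hx2⟩

lemma tmap_tmap [DecidableEq V] [DecidableEq V'] {σ : Finset V} {σ' : Finset V'}
    {e : {x // x ∈ σ} ≃ {x // x ∈ σ'}} {τ : Finset V} (hτ : τ ⊆ σ) :
    tmap σ' σ e.symm (tmap σ σ' e τ) = τ := by
  ext v
  rw [mem_tmap]
  constructor
  · rintro ⟨y, hy, rfl⟩
    obtain ⟨x, hx1, hx2⟩ := mem_tmap.1 hy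
    have hxy : e x = y := Subtype.ext hx2
    rw [← hxy, Equiv.symm_apply_apply]
    exact hx1
  · intro hv
    refine ⟨e ⟨v, hτ hv⟩, mem_tmap.2 ⟨⟨v, hτ hv⟩, hv, rfl⟩, by simp⟩

lemma tmap_pairs [DecidableEq V] {σ : Finset V} {σ' : Finset V'}
    {e : {x // x ∈ σ} ≃ {x // x ∈ σ'}} {τ : Finset V} {γ : Type*}
    (pr : V → γ) (pr' : V' → γ) (hpr : ∀ x : {x // x ∈ σ}, pr' ↑(e x) = pr ↑x)
    (hτ : τ ⊆ σ) :
    (tmap σ σ' e τ).val.map pr' = τ.val.map pr := by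
  have h1 : ((τ.subtype (· ∈ σ)).map (Function.Embedding.subtype _)) = τ := by
    rw [Finset.subtype_map]
    exact Finset.filter_true_of_mem hτ
  conv_rhs => rw [← h1]
  rw [tmap, Finset.map_val, Finset.map_val, Multiset.map_map, Multiset.map_map]
  exact Multiset.map_congr rfl (fun x _ => hpr x)

lemma tmap_univ [DecidableEq V] {σ : Finset V} {σ' : Finset V'}
    {e : {x // x ∈ σ} ≃ {x // x ∈ σ'}} : tmap σ σ' e σ = σ' := by
  apply Finset.Subset.antisymm tmap_subset
  intro y hy
  exact mem_tmap.2 ⟨e.symm ⟨y, hy⟩, (e.symm ⟨y, hy⟩).2, by simp⟩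

lemma count_NM [DecidableEq V] (N : V → ℕ) (U : Finset V) (n : ℕ) :
    Multiset.count n (NM N U) = (U.filter (fun v => N v = n)).card := by
  rw [NM, Multiset.count_map]
  simp [Finset.card, Finset.filter, eq_comm]

def Fcnt [Fintype V] [DecidableEq V] (G : SimpleGraph V) [DecidableRel G.Adj]
    (N : V → ℕ) (σ τ : Finset V) (n : ℕ) : ℕ :=
  (Finset.univ.filter (fun v => v ∉ σ ∧ N v = n ∧
    σ.filter (fun u => G.Adj v u) = τ)).card

def Gcnt [Fintype V] [DecidableEq V] (G : SimpleGraph V) [DecidableRel G.Adj]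
    (N : V → ℕ) (σ τ : Finset V) (n : ℕ) : ℕ :=
  (Finset.univ.filter (fun v => v ∉ σ ∧ N v = n ∧ ∀ u ∈ τ, G.Adj v u)).card

lemma lk_eq [Fintype V] [DecidableEq V] (G : SimpleGraph V) [DecidableRel G.Adj]
    {σ τ : Finset V} (hσ : G.IsClique (σ : Set V)) (hτ : τ ⊆ σ) :
    lk G τ = (σ \ τ) ∪ Finset.univ.filter (fun v => v ∉ σ ∧ ∀ u ∈ τ, G.Adj v u) := by
  have hτc : G.IsClique (τ : Set V) := hσ.subset (Finset.coe_subset.2 hτ)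
  ext v
  simp only [lk, Set.Finite.mem_toFinset, Set.mem_setOf_eq, Finset.mem_union,
    Finset.mem_sdiff, Finset.mem_filter, Finset.mem_univ, true_and]
  constructor
  · rintro ⟨hvτ, hcl⟩
    by_cases hvσ : v ∈ σ
    · exact Or.inl ⟨hvσ, hvτ⟩
    · refine Or.inr ⟨hvσ, fun u hu => ?_⟩
      exact (SimpleGraph.isClique_insert.1 hcl).2 u (by exact_mod_cast hu)
        (fun h => hvσ (h ▸ hτ hu))
  · rintro (⟨hvσ, hvτ⟩ | ⟨hvσ, hadj⟩)
    · refine ⟨hvτ, hσ.subset ?_⟩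
      rw [Set.insert_subset_iff]
      exact ⟨hvσ, Finset.coe_subset.2 hτ⟩
    · refine ⟨fun h => hvσ (hτ h), SimpleGraph.isClique_insert.2
        ⟨hτc, fun u hu _ => hadj u (by exact_mod_cast hu)⟩⟩

lemma lk_count [Fintype V] [DecidableEq V] (G : SimpleGraph V) [DecidableRel G.Adj]
    (N : V → ℕ) {σ τ : Finset V} (hσ : G.IsClique (σ : Set V)) (hτ : τ ⊆ σ) (n : ℕ) :
    Multiset.count n (NM N (lk G τ)) = Gcnt G N σ τ n + Multiset.count n (NM N (σ \ τ)) := by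
  rw [count_NM, count_NM, lk_eq G hσ hτ, Finset.filter_union]
  rw [Finset.card_union_of_disjoint, add_comm]
  · congr 1
    rw [Gcnt]
    congr 1
    ext v
    simp only [Finset.mem_filter, Finset.mem_univ, true_and]
    tauto
  · rw [Finset.disjoint_left]
    intro v hv1 hv2
    simp only [Finset.mem_filter, Finset.mem_sdiff, Finset.mem_univ, true_and] at hv1 hv2
    exact hv2.1.1 hv1.1.1

lemma Gcnt_sum [Fintype V] [DecidableEq V] (G : SimpleGraph V) [DecidableRel G.Adj]
    (N : V → ℕ) {σ τ : Finset V} (hτ : τ ⊆ σ) (n : ℕ) :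
    Gcnt G N σ τ n = ∑ ρ ∈ σ.powerset.filter (fun ρ => τ ⊆ ρ), Fcnt G N σ ρ n := by
  rw [Gcnt, Finset.card_eq_sum_card_fiberwise
    (f := fun v => σ.filter (fun u => G.Adj v u))
    (t := σ.powerset.filter (fun ρ => τ ⊆ ρ))]
  · apply Finset.sum_congr rfl
    intro ρ hρ
    simp only [Finset.mem_filter, Finset.mem_powerset] at hρ
    rw [Fcnt]
    congr 1
    ext v
    simp only [Finset.mem_filter, Finset.mem_univ, true_and]
    constructor
    · rintro ⟨⟨h1, h2, _⟩, h4⟩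
      exact ⟨h1, h2, h4⟩
    · rintro ⟨h1, h2, h4⟩
      refine ⟨⟨h1, h2, fun u hu => ?_⟩, h4⟩
      have : u ∈ σ.filter (fun u => G.Adj v u) := h4 ▸ hρ.2 hu
      exact (Finset.mem_filter.1 this).2
  · intro v hv
    simp only [Finset.mem_coe] at hv ⊢
    simp only [Finset.mem_filter, Finset.mem_univ, true_and] at hv ⊢
    refine ⟨Finset.mem_powerset.2 (Finset.filter_subset _ _), fun u hu => ?_⟩
    exact Finset.mem_filter.2 ⟨hτ hu, hv.2.2 u hu⟩


lemma NM_sdiff [DecidableEq V] (N : V → ℕ) {σ τ : Finset V} (hτ : τ ⊆ σ) :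
    NM N σ = NM N τ + NM N (σ \ τ) := by
  rw [NM, NM, NM, Finset.sdiff_val, ← Multiset.map_add]
  congr 1
  rw [add_tsub_cancel_of_le (Finset.val_le_iff.2 hτ)]

lemma Gcnt_cross [Fintype V] [Fintype V'] [DecidableEq V] [DecidableEq V']
    (G : SimpleGraph V) (G' : SimpleGraph V') [DecidableRel G.Adj] [DecidableRel G'.Adj]
    (N : V → ℕ) (N' : V' → ℕ)
    (hH : ∀ (ρ : Finset V) (ρ' : Finset V'), G.IsClique (ρ : Set V) →
      G'.IsClique (ρ' : Set V') → NM N ρ = NM N' ρ' → NM N (lk G ρ) = NM N' (lk G' ρ'))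
    {σ τ : Finset V} {σ' τ' : Finset V'}
    (hσ : G.IsClique (σ : Set V)) (hσ' : G'.IsClique (σ' : Set V'))
    (hτ : τ ⊆ σ) (hτ' : τ' ⊆ σ')
    (hNσ : NM N σ = NM N' σ') (hNτ : NM N τ = NM N' τ') (n : ℕ) :
    Gcnt G N σ τ n = Gcnt G' N' σ' τ' n := by
  have h1 := lk_count G N hσ hτ n
  have h2 := lk_count G' N' hσ' hτ' n
  have hlk : NM N (lk G τ) = NM N' (lk G' τ') :=
    hH τ τ' (hσ.subset (Finset.coe_subset.2 hτ)) (hσ'.subset (Finset.coe_subset.2 hτ')) hNτ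
  have hs1 := congrArg (Multiset.count n) (NM_sdiff N hτ)
  have hs2 := congrArg (Multiset.count n) (NM_sdiff N' hτ')
  rw [Multiset.count_add] at hs1 hs2
  have hcσ := congrArg (Multiset.count n) hNσ
  have hcτ := congrArg (Multiset.count n) hNτ
  have hclk := congrArg (Multiset.count n) hlk
  omega

lemma Fcnt_cross [Fintype V] [Fintype V'] [DecidableEq V] [DecidableEq V']
    (G : SimpleGraph V) (G' : SimpleGraph V') [DecidableRel G.Adj] [DecidableRel G'.Adj]
    (N : V → ℕ) (N' : V' → ℕ)
    (hH : ∀ (ρ : Finset V) (ρ' : Finset V'), G.IsClique (ρ : Set V) →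
      G'.IsClique (ρ' : Set V') → NM N ρ = NM N' ρ' → NM N (lk G ρ) = NM N' (lk G' ρ'))
    {σ : Finset V} {σ' : Finset V'}
    (hσ : G.IsClique (σ : Set V)) (hσ' : G'.IsClique (σ' : Set V'))
    (e : {x // x ∈ σ} ≃ {x // x ∈ σ'}) (he : ∀ x, N' ↑(e x) = N ↑x) (n : ℕ) :
    ∀ (k : ℕ) (τ : Finset V), τ ⊆ σ → σ.card - τ.card ≤ k →
      Fcnt G N σ τ n = Fcnt G' N' σ' (tmap σ σ' e τ) n := by
  have hNσ : NM N σ = NM N' σ' := by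
    have := tmap_pairs (e := e) N N' he (Finset.Subset.refl σ)
    rw [tmap_univ] at this
    exact this.symm
  have hNτ : ∀ τ : Finset V, τ ⊆ σ → NM N τ = NM N' (tmap σ σ' e τ) :=
    fun τ hτ => (tmap_pairs (e := e) N N' he hτ).symm
  intro k
  induction k with
  | zero =>
    intro τ hτ hcard
    have hτσ : τ = σ := Finset.eq_of_subset_of_card_le hτ
      (by have := Finset.card_le_card hτ; omega)
    subst hτσ
    rw [tmap_univ]
    have hsing : τ.powerset.filter (fun ρ => τ ⊆ ρ) = {τ} := by
      ext ρ
      simp only [Finset.mem_filter, Finset.mem_powerset, Finset.mem_singleton]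
      exact ⟨fun h => Finset.Subset.antisymm h.1 h.2, fun h => h ▸ ⟨Finset.Subset.refl _, Finset.Subset.refl _⟩⟩
    have hsing' : σ'.powerset.filter (fun ρ => σ' ⊆ ρ) = {σ'} := by
      ext ρ
      simp only [Finset.mem_filter, Finset.mem_powerset, Finset.mem_singleton]
      exact ⟨fun h => Finset.Subset.antisymm h.1 h.2, fun h => h ▸ ⟨Finset.Subset.refl _, Finset.Subset.refl _⟩⟩
    have g1 := Gcnt_sum G N (Finset.Subset.refl τ) n
    have g2 := Gcnt_sum G' N' (Finset.Subset.refl σ') n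
    rw [hsing, Finset.sum_singleton] at g1
    rw [hsing', Finset.sum_singleton] at g2
    rw [← g1, ← g2]
    exact Gcnt_cross G G' N N' hH hσ hσ' (Finset.Subset.refl _) (Finset.Subset.refl _)
      hNσ (by rw [hNσ]) n
  | succ k ih =>
    intro τ hτ hcard
    have hsp : σ.powerset.filter (fun ρ => τ ⊆ ρ)
        = insert τ (σ.powerset.filter (fun ρ => τ ⊂ ρ)) := by
      ext ρ
      simp only [Finset.mem_filter, Finset.mem_powerset, Finset.mem_insert]
      constructor
      · rintro ⟨h1, h2⟩
        rcases eq_or_ne ρ τ with h | h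
        · exact Or.inl h
        · exact Or.inr ⟨h1, Finset.ssubset_iff_subset_ne.2 ⟨h2, Ne.symm h⟩⟩
      · rintro (rfl | ⟨h1, h2⟩)
        · exact ⟨hτ, Finset.Subset.refl _⟩
        · exact ⟨h1, h2.subset⟩
    set τ' := tmap σ σ' e τ with hτ'def
    have hτ' : τ' ⊆ σ' := tmap_subset
    have hsp' : σ'.powerset.filter (fun ρ => τ' ⊆ ρ)
        = insert τ' (σ'.powerset.filter (fun ρ => τ' ⊂ ρ)) := by
      ext ρ
      simp only [Finset.mem_filter, Finset.mem_powerset, Finset.mem_insert]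
      constructor
      · rintro ⟨h1, h2⟩
        rcases eq_or_ne ρ τ' with h | h
        · exact Or.inl h
        · exact Or.inr ⟨h1, Finset.ssubset_iff_subset_ne.2 ⟨h2, Ne.symm h⟩⟩
      · rintro (rfl | ⟨h1, h2⟩)
        · exact ⟨hτ', Finset.Subset.refl _⟩
        · exact ⟨h1, h2.subset⟩
    have hnotmem : τ ∉ σ.powerset.filter (fun ρ => τ ⊂ ρ) := by
      simp [Finset.ssubset_iff_subset_ne]
    have hnotmem' : τ' ∉ σ'.powerset.filter (fun ρ => τ' ⊂ ρ) := by
      simp [Finset.ssubset_iff_subset_ne]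
    have g1 := Gcnt_sum G N hτ n
    have g2 := Gcnt_sum G' N' hτ' n
    rw [hsp, Finset.sum_insert hnotmem] at g1
    rw [hsp', Finset.sum_insert hnotmem'] at g2
    have hsum : ∑ ρ ∈ σ.powerset.filter (fun ρ => τ ⊂ ρ), Fcnt G N σ ρ n
        = ∑ ρ' ∈ σ'.powerset.filter (fun ρ' => τ' ⊂ ρ'), Fcnt G' N' σ' ρ' n := by
      refine Finset.sum_nbij' (tmap σ σ' e) (tmap σ' σ e.symm) ?_ ?_ ?_ ?_ ?_
      · intro ρ hρ
        simp only [Finset.mem_filter, Finset.mem_powerset] at hρ ⊢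
        refine ⟨tmap_subset, Finset.ssubset_iff_subset_ne.2
          ⟨tmap_mono hρ.2.subset, fun h => ?_⟩⟩
        have := congrArg (tmap σ' σ e.symm) h
        rw [tmap_tmap hτ, tmap_tmap hρ.1] at this
        exact hρ.2.ne this
      · intro ρ' hρ'
        simp only [Finset.mem_filter, Finset.mem_powerset] at hρ' ⊢
        refine ⟨tmap_subset, Finset.ssubset_iff_subset_ne.2 ⟨?_, fun h => ?_⟩⟩
        · have := tmap_mono (e := e.symm) hρ'.2.subset
          rwa [hτ'def, tmap_tmap hτ] at this
        · have h2 : tmap σ σ' e (tmap σ' σ e.symm ρ') = ρ' := by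
            have := tmap_tmap (e := e.symm) hρ'.1
            rwa [Equiv.symm_symm] at this
          exact hρ'.2.ne (by rw [hτ'def, h, h2])
      · intro ρ hρ
        simp only [Finset.mem_filter, Finset.mem_powerset] at hρ
        exact tmap_tmap hρ.1
      · intro ρ' hρ'
        simp only [Finset.mem_filter, Finset.mem_powerset] at hρ'
        have := tmap_tmap (e := e.symm) hρ'.1
        rwa [Equiv.symm_symm] at this
      · intro ρ hρ
        simp only [Finset.mem_filter, Finset.mem_powerset] at hρ
        have : τ.card < ρ.card := Finset.card_lt_card hρ.2
        have hρσ : ρ.card ≤ σ.card := Finset.card_le_card hρ.1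
        exact ih ρ hρ.1 (by omega)
    have gc := Gcnt_cross G G' N N' hH hσ hσ' hτ hτ' hNσ (hNτ τ hτ) n
    omega

lemma count_outside_sum {W : Type*} [Fintype W] [DecidableEq W] (H : SimpleGraph W)
    [DecidableRel H.Adj] (M : W → ℕ) (g : W → ℤ) (ς : Finset W)
    (n : ℕ) (p : Multiset (ℤ × ℕ)) :
    (Finset.univ.filter (fun v => v ∉ ς ∧ M v = n ∧
      (ς.filter (fun u => H.Adj v u)).val.map (fun u => (g u, M u)) = p)).card =
    ∑ τ ∈ ς.powerset.filter (fun τ => τ.val.map (fun u => (g u, M u)) = p),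
      Fcnt H M ς τ n := by
  rw [Finset.card_eq_sum_card_fiberwise
    (f := fun v => ς.filter (fun u => H.Adj v u))
    (t := ς.powerset.filter (fun τ => τ.val.map (fun u => (g u, M u)) = p))]
  · apply Finset.sum_congr rfl
    intro τ hτ
    simp only [Finset.mem_filter, Finset.mem_powerset] at hτ
    rw [Fcnt]
    congr 1
    ext v
    simp only [Finset.mem_filter, Finset.mem_univ, true_and]
    constructor
    · rintro ⟨⟨h1, h2, _⟩, h4⟩
      exact ⟨h1, h2, h4⟩
    · rintro ⟨h1, h2, h4⟩
      exact ⟨⟨h1, h2, h4 ▸ hτ.2⟩, h4⟩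
  · intro v hv
    simp only [Finset.mem_coe] at hv ⊢
    simp only [Finset.mem_filter, Finset.mem_univ, true_and] at hv ⊢
    exact ⟨Finset.mem_powerset.2 (Finset.filter_subset _ _), hv.2.2⟩

lemma count_outside_cross [Fintype V] [Fintype V'] [DecidableEq V] [DecidableEq V']
    (G : SimpleGraph V) (G' : SimpleGraph V') [DecidableRel G.Adj] [DecidableRel G'.Adj]
    (N : V → ℕ) (N' : V' → ℕ) (f : V → ℤ) (f' : V' → ℤ)
    (hH : ∀ (ρ : Finset V) (ρ' : Finset V'), G.IsClique (ρ : Set V) →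
      G'.IsClique (ρ' : Set V') → NM N ρ = NM N' ρ' → NM N (lk G ρ) = NM N' (lk G' ρ'))
    {σ : Finset V} {σ' : Finset V'}
    (hσ : G.IsClique (σ : Set V)) (hσ' : G'.IsClique (σ' : Set V'))
    (e : {x // x ∈ σ} ≃ {x // x ∈ σ'})
    (he : ∀ x, (f' ↑(e x), N' ↑(e x)) = (f ↑x, N ↑x))
    (n : ℕ) (p : Multiset (ℤ × ℕ)) :
    (Finset.univ.filter (fun v => v ∉ σ ∧ N v = n ∧
      (σ.filter (fun u => G.Adj v u)).val.map (fun u => (f u, N u)) = p)).card =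
    (Finset.univ.filter (fun v' => v' ∉ σ' ∧ N' v' = n ∧
      (σ'.filter (fun u => G'.Adj v' u)).val.map (fun u => (f' u, N' u)) = p)).card := by
  have heN : ∀ x, N' ↑(e x) = N ↑x := fun x => congrArg Prod.snd (he x)
  have he' : ∀ y, (f ↑(e.symm y), N ↑(e.symm y)) = (f' ↑y, N' ↑y) := by
    intro y
    have h2 := he (e.symm y)
    rw [Equiv.apply_symm_apply] at h2
    exact h2.symm
  rw [count_outside_sum G N f σ n p, count_outside_sum G' N' f' σ' n p]
  refine Finset.sum_nbij' (tmap σ σ' e) (tmap σ' σ e.symm) ?_ ?_ ?_ ?_ ?_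
  · intro τ hτ
    simp only [Finset.mem_filter, Finset.mem_powerset] at hτ ⊢
    exact ⟨tmap_subset, by
      rw [tmap_pairs (fun u => (f u, N u)) (fun u => (f' u, N' u)) he hτ.1]; exact hτ.2⟩
  · intro τ' hτ'
    simp only [Finset.mem_filter, Finset.mem_powerset] at hτ' ⊢
    exact ⟨tmap_subset, by
      rw [tmap_pairs (fun u => (f' u, N' u)) (fun u => (f u, N u)) he' hτ'.1]; exact hτ'.2⟩
  · intro τ hτ
    simp only [Finset.mem_filter, Finset.mem_powerset] at hτ
    exact tmap_tmap hτ.1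
  · intro τ' hτ'
    simp only [Finset.mem_filter, Finset.mem_powerset] at hτ'
    have := tmap_tmap (e := e.symm) hτ'.1
    rwa [Equiv.symm_symm] at this
  · intro τ hτ
    simp only [Finset.mem_filter, Finset.mem_powerset] at hτ
    exact Fcnt_cross G G' N N' hH hσ hσ' e heN n σ.card τ hτ.1 (by omega)

lemma count_map_fin {α γ : Type*} [DecidableEq γ] (s : Finset α) (g : α → γ) (c : γ) :
    Multiset.count c (s.val.map g) = (s.filter (fun a => g a = c)).card := by
  rw [Multiset.count_map]
  simp [Finset.card, Finset.filter, eq_comm]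

lemma filter_adj_eq_erase [Fintype V] [DecidableEq V] (G : SimpleGraph V)
    [DecidableRel G.Adj] {σ : Finset V} (hσ : G.IsClique (σ : Set V)) {v : V} (hv : v ∈ σ) :
    σ.filter (fun u => G.Adj v u) = σ.erase v := by
  ext u
  simp only [Finset.mem_filter, Finset.mem_erase]
  constructor
  · rintro ⟨h1, h2⟩
    exact ⟨(G.ne_of_adj h2).symm, h1⟩
  · rintro ⟨h1, h2⟩
    exact ⟨h2, hσ (by exact_mod_cast hv) (by exact_mod_cast h2) (Ne.symm h1)⟩

lemma cons_erase_map {α γ : Type*} [DecidableEq α] {σ : Finset α} (g : α → γ)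
    {v : α} (hv : v ∈ σ) :
    g v ::ₘ (σ.erase v).val.map g = σ.val.map g := by
  rw [Finset.erase_val]
  have : v ::ₘ σ.val.erase v = σ.val := Multiset.cons_erase (by exact_mod_cast hv)
  conv_rhs => rw [← this]
  rw [Multiset.map_cons]

lemma count_inside [Fintype V] [DecidableEq V] (G : SimpleGraph V)
    [DecidableRel G.Adj] (N : V → ℕ) (f : V → ℤ) {σ : Finset V}
    (hmem : ∀ v, v ∈ σ ↔ f v ≠ 0) (hσ : G.IsClique (σ : Set V))
    {k : ℤ} (hk : k ≠ 0) (n : ℕ) (p : Multiset (ℤ × ℕ)) :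
    (Finset.univ.filter (fun v => f v = k ∧ N v = n ∧
      (σ.filter (fun u => G.Adj v u)).val.map (fun u => (f u, N u)) = p)).card =
    if ((k, n) ::ₘ p) = σ.val.map (fun u => (f u, N u)) then
      Multiset.count (k, n) (σ.val.map (fun u => (f u, N u))) else 0 := by
  split_ifs with hif
  · rw [count_map_fin]
    congr 1
    ext v
    simp only [Finset.mem_filter, Finset.mem_univ, true_and, Prod.mk.injEq]
    constructor
    · rintro ⟨h1, h2, h3⟩
      exact ⟨(hmem v).2 (h1 ▸ hk), h1, h2⟩
    · rintro ⟨hvσ, h1, h2⟩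
      refine ⟨h1, h2, ?_⟩
      rw [filter_adj_eq_erase G hσ hvσ]
      have hc := cons_erase_map (fun u => (f u, N u)) hvσ
      rw [← hif] at hc
      simp only [h1, h2] at hc
      exact (Multiset.cons_inj_right _).1 hc
  · rw [Finset.card_eq_zero, Finset.filter_eq_empty_iff]
    rintro v - ⟨h1, h2, h3⟩
    have hvσ : v ∈ σ := (hmem v).2 (h1 ▸ hk)
    apply hif
    rw [filter_adj_eq_erase G hσ hvσ] at h3
    have hc := cons_erase_map (fun u => (f u, N u)) hvσ
    simp only [h1, h2, h3] at hc
    exact hc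

lemma profile_step [Fintype V] [DecidableEq V] (G : SimpleGraph V)
    [DecidableRel G.Adj] (N : V → ℕ) (f : V → ℤ) {σ : Finset V}
    (hmem : ∀ v, v ∈ σ ↔ f v ≠ 0) (v : V) (c : ℤ) (hc : c ≠ 0) :
    profile N (fun u => if u = v then c else if G.Adj v u then f u else 0) =
      (c, N v) ::ₘ (σ.filter (fun u => G.Adj v u)).val.map (fun u => (f u, N u)) := by
  set g := fun u => if u = v then c else if G.Adj v u then f u else 0 with hg
  have hvnot : v ∉ σ.filter (fun u => G.Adj v u) := by
    simp [Finset.mem_filter, G.irrefl]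
  have hsupp : Set.Finite.toFinset (Set.toFinite {u | g u ≠ 0})
      = insert v (σ.filter (fun u => G.Adj v u)) := by
    ext u
    simp only [Set.Finite.mem_toFinset, Set.mem_setOf_eq, Finset.mem_insert,
      Finset.mem_filter, hg]
    by_cases huv : u = v
    · subst huv; simp [hc]
    · simp only [if_neg huv]
      by_cases hadj : G.Adj v u
      · simp [hadj, hmem u, huv]
      · simp [hadj, huv]
  rw [profile, hsupp, Finset.insert_val_of_notMem hvnot, Multiset.map_cons]
  congr 1
  · simp [hg]
  · apply Multiset.map_congr rfl
    intro u hu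
    have hu' : u ∈ σ.filter (fun u => G.Adj v u) := hu
    simp only [Finset.mem_filter] at hu'
    have huv : u ≠ v := fun h => G.irrefl (h ▸ hu'.2)
    simp [hg, huv, hu'.2]

lemma map_univ_subtype {α γ : Type*} (s : Finset α) (g : α → γ) :
    Multiset.map (fun x : {x // x ∈ s} => g ↑x) (Finset.univ.val) = s.val.map g := by
  rw [Finset.univ_eq_attach]
  have h1 : s.attach.val = s.val.attach := rfl
  rw [h1]
  conv_rhs => rw [← Multiset.attach_map_val s.val]
  rw [Multiset.map_map]
  rfl


theorem stmt6 [Fintype V] [Fintype V'] [DecidableEq V] [DecidableEq V']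
    (G : SimpleGraph V) (G' : SimpleGraph V')
    [DecidableRel G.Adj] [DecidableRel G'.Adj]
    (N : V → ℕ) (N' : V' → ℕ) (hN : ∀ v, 2 ≤ N v) (hN' : ∀ v, 2 ≤ N' v)
    (hLR : LinkRegular G N) (hLR' : LinkRegular G' N')
    (hEq : EquivLinkRegular G N G' N')
    (f : V → ℤ) (f' : V' → ℤ)
    (hf : IsPoweredClique G N f) (hf' : IsPoweredClique G' N' f')
    (hP : profile N f = profile N' f') :
    ∃ Φ : V ≃ V', (∀ v, N' (Φ v) = N v) ∧
      ∀ (v : V) (b : Bool),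
        (step G N f (v, b) = none ↔ step G' N' f' (Φ v, b) = none) ∧
        ∀ g g', step G N f (v, b) = some g → step G' N' f' (Φ v, b) = some g' →
          profile N g = profile N' g' := by
  classical
  set σ : Finset V := Set.Finite.toFinset (Set.toFinite {v : V | f v ≠ 0}) with hσdef
  set σ' : Finset V' := Set.Finite.toFinset (Set.toFinite {v : V' | f' v ≠ 0}) with hσ'def
  have hmem : ∀ v, v ∈ σ ↔ f v ≠ 0 := fun v => Set.Finite.mem_toFinset _
  have hmem' : ∀ v, v ∈ σ' ↔ f' v ≠ 0 := fun v => Set.Finite.mem_toFinset _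
  have hσcl : G.IsClique (σ : Set V) := by
    have h : (σ : Set V) = {v | f v ≠ 0} := Set.Finite.coe_toFinset _
    rw [h]; exact hf.1
  have hσ'cl : G'.IsClique (σ' : Set V') := by
    have h : (σ' : Set V') = {v | f' v ≠ 0} := Set.Finite.coe_toFinset _
    rw [h]; exact hf'.1
  have hPP : σ.val.map (fun v => (f v, N v)) = σ'.val.map (fun v => (f' v, N' v)) := hP
  have hsub : Multiset.map (fun x : {x // x ∈ σ} => (f ↑x, N ↑x)) Finset.univ.val
      = Multiset.map (fun x : {x // x ∈ σ'} => (f' ↑x, N' ↑x)) Finset.univ.val := by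
    rw [map_univ_subtype σ (fun v => (f v, N v)),
      map_univ_subtype σ' (fun v => (f' v, N' v))]
    exact hPP
  obtain ⟨e, he⟩ := exists_equiv_of_map_eq _ _ hsub
  have htags : Multiset.map (fun v => (f v, N v,
        (σ.filter (fun u => G.Adj v u)).val.map (fun u => (f u, N u)))) Finset.univ.val
      = Multiset.map (fun v => (f' v, N' v,
        (σ'.filter (fun u => G'.Adj v u)).val.map (fun u => (f' u, N' u)))) Finset.univ.val := by
    refine Multiset.ext.2 ?_
    rintro ⟨k, n, p⟩
    rw [count_map_fin, count_map_fin]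
    by_cases hk : k = 0
    · subst hk
      have h1 : Finset.univ.filter (fun v => (f v, N v,
            (σ.filter (fun u => G.Adj v u)).val.map (fun u => (f u, N u))) = ((0 : ℤ), n, p))
          = Finset.univ.filter (fun v => v ∉ σ ∧ N v = n ∧
            (σ.filter (fun u => G.Adj v u)).val.map (fun u => (f u, N u)) = p) := by
        ext v
        simp only [Finset.mem_filter, Finset.mem_univ, true_and, Prod.mk.injEq]
        constructor
        · rintro ⟨h1, h2, h3⟩
          exact ⟨fun hv => (hmem v).1 hv h1, h2, h3⟩
        · rintro ⟨h1, h2, h3⟩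
          refine ⟨?_, h2, h3⟩
          by_contra h
          exact h1 ((hmem v).2 h)
      have h2 : Finset.univ.filter (fun v => (f' v, N' v,
            (σ'.filter (fun u => G'.Adj v u)).val.map (fun u => (f' u, N' u))) = ((0 : ℤ), n, p))
          = Finset.univ.filter (fun v => v ∉ σ' ∧ N' v = n ∧
            (σ'.filter (fun u => G'.Adj v u)).val.map (fun u => (f' u, N' u)) = p) := by
        ext v
        simp only [Finset.mem_filter, Finset.mem_univ, true_and, Prod.mk.injEq]
        constructor
        · rintro ⟨h1, h2, h3⟩
          exact ⟨fun hv => (hmem' v).1 hv h1, h2, h3⟩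
        · rintro ⟨h1, h2, h3⟩
          refine ⟨?_, h2, h3⟩
          by_contra h
          exact h1 ((hmem' v).2 h)
      rw [h1, h2]
      exact count_outside_cross G G' N N' f f' hEq.2 hσcl hσ'cl e he n p
    · have h1 : Finset.univ.filter (fun v => (f v, N v,
            (σ.filter (fun u => G.Adj v u)).val.map (fun u => (f u, N u))) = (k, n, p))
          = Finset.univ.filter (fun v => f v = k ∧ N v = n ∧
            (σ.filter (fun u => G.Adj v u)).val.map (fun u => (f u, N u)) = p) := by
        ext v
        simp only [Finset.mem_filter, Finset.mem_univ, true_and, Prod.mk.injEq]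
      have h2 : Finset.univ.filter (fun v => (f' v, N' v,
            (σ'.filter (fun u => G'.Adj v u)).val.map (fun u => (f' u, N' u))) = (k, n, p))
          = Finset.univ.filter (fun v => f' v = k ∧ N' v = n ∧
            (σ'.filter (fun u => G'.Adj v u)).val.map (fun u => (f' u, N' u)) = p) := by
        ext v
        simp only [Finset.mem_filter, Finset.mem_univ, true_and, Prod.mk.injEq]
      rw [h1, h2, count_inside G N f hmem hσcl hk n p,
        count_inside G' N' f' hmem' hσ'cl hk n p, hPP]
  obtain ⟨Φ, hΦ⟩ := exists_equiv_of_map_eq _ _ htags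
  have hfΦ : ∀ v, f' (Φ v) = f v := fun v => congrArg (fun t => t.1) (hΦ v)
  have hNΦ : ∀ v, N' (Φ v) = N v := fun v => congrArg (fun t => t.2.1) (hΦ v)
  have hmapΦ : ∀ v, (σ'.filter (fun u => G'.Adj (Φ v) u)).val.map (fun u => (f' u, N' u))
      = (σ.filter (fun u => G.Adj v u)).val.map (fun u => (f u, N u)) :=
    fun v => congrArg (fun t => t.2.2) (hΦ v)
  have hstepF : ∀ v : V, step G N f (v, false) =
      (if N v ≠ 2 ∧ -((N v / 2 : ℕ) : ℤ) < f v ∧ f v ≤ 0 then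
        some (fun u => if u = v then f v - 1 else if G.Adj v u then f u else 0)
      else none) := fun v => rfl
  have hstepT : ∀ v : V, step G N f (v, true) =
      (if 0 ≤ f v ∧ f v < ((N v / 2 : ℕ) : ℤ) then
        some (fun u => if u = v then f v + 1 else if G.Adj v u then f u else 0)
      else none) := fun v => rfl
  have hstepF' : ∀ w : V', step G' N' f' (w, false) =
      (if N' w ≠ 2 ∧ -((N' w / 2 : ℕ) : ℤ) < f' w ∧ f' w ≤ 0 then
        some (fun u => if u = w then f' w - 1 else if G'.Adj w u then f' u else 0)
      else none) := fun w => rfl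
  have hstepT' : ∀ w : V', step G' N' f' (w, true) =
      (if 0 ≤ f' w ∧ f' w < ((N' w / 2 : ℕ) : ℤ) then
        some (fun u => if u = w then f' w + 1 else if G'.Adj w u then f' u else 0)
      else none) := fun w => rfl
  refine ⟨Φ, hNΦ, fun v b => ⟨?_, ?_⟩⟩
  · cases b
    · rw [hstepF v, hstepF' (Φ v), hfΦ v, hNΦ v]
      split_ifs <;> simp
    · rw [hstepT v, hstepT' (Φ v), hfΦ v, hNΦ v]
      split_ifs <;> simp
  · intro g g' hg hg'
    cases b
    · rw [hstepF v] at hg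
      rw [hstepF' (Φ v), hfΦ v, hNΦ v] at hg'
      split_ifs at hg hg' with h
      · obtain rfl := Option.some_inj.1 hg
        obtain rfl := Option.some_inj.1 hg'
        rw [profile_step G N f hmem v (f v - 1) (by omega),
          profile_step G' N' f' hmem' (Φ v) (f v - 1) (by omega), hmapΦ v, hNΦ v]
    · rw [hstepT v] at hg
      rw [hstepT' (Φ v), hfΦ v, hNΦ v] at hg'
      split_ifs at hg hg' with h
      · obtain rfl := Option.some_inj.1 hg
        obtain rfl := Option.some_inj.1 hg'
        rw [profile_step G N f hmem v (f v + 1) (by omega),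
          profile_step G' N' f' hmem' (Φ v) (f v + 1) (by omega), hmapΦ v, hNΦ v]
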